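/- Work in the upper half-plane model of H² with the geodesic γ parametrized by γ(t) = ( x₀ − y₀(cos t + cos ψ₀)/sin ψ₀ , −y₀ sin t / sin ψ₀ ) for t ∈ (0,π), where sin ψ₀ < 0, y₀ > 0. Suppose γ crosses the y-axis at parameter t*. Then the hyperbolic angle δ between γ'(t*) and the vertical field y∂_y at the crossing point satisfies cos δ = x₀·sin ψ₀ / y₀ − cos ψ₀. -/

import Mathlib

open Real

/-- At the parameter `t*` where the geodesic
`γ(t) = (x₀ − y₀(cos t + cos ψ₀)/sin ψ₀, −y₀ sin t/sin ψ₀)` crosses the `y`-axis, the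
cosine of the angle `δ` between `γ'(t*)` and the vertical field `y∂_y` equals
`x₀ sin ψ₀/y₀ − cos ψ₀` (the angle being computed with the conformal hyperbolic metric,
hence by the Euclidean formula). -/
theorem stmt_6 (ψ₀ x₀ y₀ : ℝ) (hψ : ψ₀ ∈ Set.Ioo π (2 * π)) (hs : Real.sin ψ₀ < 0)
    (hy₀ : 0 < y₀) (t : ℝ) (ht : t ∈ Set.Ioo (0 : ℝ) π)
    (hcross : x₀ - y₀ * (Real.cos t + Real.cos ψ₀) / Real.sin ψ₀ = 0) :
    (deriv (fun u => -y₀ * Real.sin u / Real.sin ψ₀) t) /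
      Real.sqrt ((deriv (fun u => x₀ - y₀ * (Real.cos u + Real.cos ψ₀) / Real.sin ψ₀) t) ^ 2 +
        (deriv (fun u => -y₀ * Real.sin u / Real.sin ψ₀) t) ^ 2) =
    x₀ * Real.sin ψ₀ / y₀ - Real.cos ψ₀ := by
  have hs0 : Real.sin ψ₀ ≠ 0 := ne_of_lt hs
  have h1 : deriv (fun u => -y₀ * Real.sin u / Real.sin ψ₀) t
      = -y₀ * Real.cos t / Real.sin ψ₀ := by
    have : HasDerivAt (fun u => -y₀ * Real.sin u / Real.sin ψ₀)
        (-y₀ * Real.cos t / Real.sin ψ₀) t := by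
      simpa using ((Real.hasDerivAt_sin t).const_mul (-y₀)).div_const (Real.sin ψ₀)
    exact this.deriv
  have h2 : deriv (fun u => x₀ - y₀ * (Real.cos u + Real.cos ψ₀) / Real.sin ψ₀) t
      = y₀ * Real.sin t / Real.sin ψ₀ := by
    have : HasDerivAt (fun u => x₀ - y₀ * (Real.cos u + Real.cos ψ₀) / Real.sin ψ₀)
        (y₀ * Real.sin t / Real.sin ψ₀) t := by
      have := ((((Real.hasDerivAt_cos t).add_const (Real.cos ψ₀)).const_mul y₀).div_const
        (Real.sin ψ₀)).const_sub x₀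
      rw [show y₀ * Real.sin t / Real.sin ψ₀ = -(y₀ * -Real.sin t / Real.sin ψ₀) by ring]
      exact this
    exact this.deriv
  rw [h1, h2]
  have hsq : (y₀ * Real.sin t / Real.sin ψ₀) ^ 2 + (-y₀ * Real.cos t / Real.sin ψ₀) ^ 2
      = (y₀ / (-Real.sin ψ₀)) ^ 2 := by
    have h := Real.sin_sq_add_cos_sq t
    field_simp
    nlinarith [h]
  rw [hsq, Real.sqrt_sq (div_nonneg hy₀.le (by linarith))]
  have hx : x₀ = y₀ * (Real.cos t + Real.cos ψ₀) / Real.sin ψ₀ := by linarith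
  rw [hx]
  field_simp
  ring
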